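/- Let F ∈ L^∞(ℝ₊, Lebesgue) with uniform infinite-volume average 0, i.e. for every ε' > 0 there is r > 0 with sup_{a≥0} |(1/r)∫_a^{a+r} F dx| ≤ ε'. For each δ > 0 there exists ε > 0 such that for every g ∈ C¹(ℝ₊) with g > 0, ∫₀^∞ g dx = 1, and |g'(x)|/g(x) ≤ ε for all x ≥ M (for some M ≥ 0), one has |∫_M^∞ F g dx| ≤ δ. -/

import Mathlib

open Real Filter Set MeasureTheory

/-- let `F ∈ L^∞(ℝ₊)` have uniform infinite-volume average `0`
(w.r.t. Lebesgue measure). For each `δ > 0` there is `ε > 0` such that for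
every `C¹` density `g > 0` on `ℝ₊` with total integral `1` and
`|g'(x)|/g(x) ≤ ε` for `x ≥ M`, one has `|∫_M^∞ F g dx| ≤ δ`. -/
theorem stmt_14 (F : ℝ → ℝ) (hFm : Measurable F)
    (hFb : ∃ C : ℝ, ∀ x : ℝ, |F x| ≤ C)
    (havg : ∀ ε' : ℝ, 0 < ε' → ∃ r : ℝ, 0 < r ∧ ∀ a : ℝ, 0 ≤ a →
      |(1 / r) * ∫ x in a..(a + r), F x| ≤ ε') :
    ∀ δ : ℝ, 0 < δ → ∃ ε : ℝ, 0 < ε ∧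
      ∀ (g : ℝ → ℝ) (M : ℝ), 0 ≤ M → ContDiff ℝ 1 g →
        (∀ x : ℝ, 0 ≤ x → 0 < g x) →
        (∫ x in Set.Ici (0:ℝ), g x) = 1 →
        (∀ x : ℝ, M ≤ x → |deriv g x| / g x ≤ ε) →
        |∫ x in Set.Ici M, F x * g x| ≤ δ := by
  obtain ⟨C₀, hC₀⟩ := hFb
  set C : ℝ := max C₀ 1 with hCdef
  have hC : (0:ℝ) < C := lt_of_lt_of_le one_pos (le_max_right _ _)
  have hFC : ∀ x, |F x| ≤ C := fun x => (hC₀ x).trans (le_max_left _ _)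
  intro δ hδ
  obtain ⟨r, hr, hravg⟩ := havg (δ / 2) (by positivity)
  set ε : ℝ := δ / (2 * C * r) with hεdef
  have hε : 0 < ε := by positivity
  refine ⟨ε, hε, ?_⟩
  intro g M hM hg hgpos hgint hgd
  have hgc : Continuous g := hg.continuous
  have hgc' : Continuous (deriv g) := hg.continuous_deriv le_rfl
  have hgd' : ∀ x, M ≤ x → |deriv g x| ≤ ε * g x := by
    intro x hx
    have hgx := hgpos x (hM.trans hx)
    have h := hgd x hx
    rw [div_le_iff₀ hgx] at h
    linarith [h]
  -- integrability of g
  have hgInt : IntegrableOn g (Ici (0:ℝ)) := by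
    by_contra h
    rw [MeasureTheory.integral_undef h] at hgint
    norm_num at hgint
  have hgIntM : IntegrableOn g (Ici M) := hgInt.mono_set (Ici_subset_Ici.mpr hM)
  have hCb : ∃ c : ℝ, ∀ x, ‖F x‖ ≤ c := ⟨C, fun x => by simpa [Real.norm_eq_abs] using hFC x⟩
  have hFgInt : IntegrableOn (fun x => F x * g x) (Ici M) :=
    hgIntM.bdd_mul hFm.aestronglyMeasurable.restrict (Filter.Eventually.of_forall hCb.choose_spec)
  have hFmul : ∀ (h : ℝ → ℝ), Continuous h → ∀ a b : ℝ,
      IntervalIntegrable (fun x => F x * h x) volume a b := by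
    intro h hh a b
    rw [intervalIntegrable_iff]
    exact (intervalIntegrable_iff.mp (hh.intervalIntegrable a b)).bdd_mul
      hFm.aestronglyMeasurable.restrict (Filter.Eventually.of_forall hCb.choose_spec)
  -- key per-interval bound
  have key : ∀ a : ℝ, M ≤ a →
      |∫ x in a..(a + r), F x * g x| ≤ δ * ∫ x in a..(a + r), g x := by
    intro a ha
    have har : a ≤ a + r := by linarith
    have ha0 : (0:ℝ) ≤ a := hM.trans ha
    obtain ⟨m, hm, hmin⟩ := isCompact_Icc.exists_isMinOn (nonempty_Icc.mpr har)
      hgc.continuousOn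
    have hmin' : ∀ y ∈ Icc a (a + r), g m ≤ g y := hmin
    have hgm0 : 0 ≤ g m := (hgpos m (ha0.trans hm.1)).le
    have hIg : (0:ℝ) ≤ ∫ x in a..(a + r), g x :=
      intervalIntegral.integral_nonneg har (fun x hx => (hgpos x (ha0.trans hx.1)).le)
    have hder_le : (∫ x in a..(a + r), |deriv g x|) ≤ ε * ∫ x in a..(a + r), g x := by
      rw [← intervalIntegral.integral_const_mul]
      exact intervalIntegral.integral_mono_on har (hgc'.abs.intervalIntegrable _ _)
        ((continuous_const.mul hgc).intervalIntegrable _ _)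
        (fun x hx => hgd' x (ha.trans hx.1))
    have hdiff : ∀ x ∈ Icc a (a + r), |g x - g m| ≤ ε * ∫ t in a..(a + r), g t := by
      have base : ∀ u v : ℝ, u ∈ Icc a (a + r) → v ∈ Icc a (a + r) → u ≤ v →
          |g v - g u| ≤ ε * ∫ t in a..(a + r), g t := by
        intro u v hu hv huv
        have hsub : g v - g u = ∫ t in u..v, deriv g t :=
          (intervalIntegral.integral_deriv_eq_sub
            (fun t _ => (hg.differentiable one_ne_zero).differentiableAt)
            (hgc'.intervalIntegrable _ _)).symm
        rw [hsub]
        have h1 : |∫ t in u..v, deriv g t| ≤ ∫ t in u..v, |deriv g t| := by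
          simpa [Real.norm_eq_abs] using
            intervalIntegral.norm_integral_le_integral_norm (f := deriv g) (a := u)
              (b := v) huv
        have h2 : (∫ t in u..v, |deriv g t|) ≤ ∫ t in a..(a + r), |deriv g t| :=
          intervalIntegral.integral_mono_interval hu.1 huv hv.2
            (Filter.Eventually.of_forall fun t => abs_nonneg _)
            (hgc'.abs.intervalIntegrable _ _)
        exact h1.trans (h2.trans hder_le)
      intro x hx
      rcases le_total m x with h | h
      · exact base m x hm hx h
      · have := base x m hx hm h
        rwa [abs_sub_comm] at this
    have hsplit : (∫ x in a..(a + r), F x * g x)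
        = (∫ x in a..(a + r), F x * (g x - g m)) + (∫ x in a..(a + r), F x) * g m := by
      rw [← intervalIntegral.integral_mul_const,
        ← intervalIntegral.integral_add (hFmul (fun x => g x - g m) (hgc.sub continuous_const) _ _)
          (hFmul (fun _ => g m) continuous_const _ _)]
      congr 1
      ext x
      ring
    have hb1 : |∫ x in a..(a + r), F x * (g x - g m)|
        ≤ C * (ε * ∫ t in a..(a + r), g t) * r := by
      have := intervalIntegral.norm_integral_le_of_norm_le_const
        (C := C * (ε * ∫ t in a..(a + r), g t)) (a := a) (b := a + r)
        (f := fun x => F x * (g x - g m)) ?_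
      · simpa [Real.norm_eq_abs, abs_of_pos hr] using this
      · intro x hx
        have hx' : x ∈ Icc a (a + r) := by
          rw [Set.uIoc_of_le har] at hx
          exact ⟨hx.1.le, hx.2⟩
        rw [Real.norm_eq_abs, abs_mul]
        exact mul_le_mul (hFC x) (hdiff x hx') (abs_nonneg _) hC.le
    have hb2 : |(∫ x in a..(a + r), F x) * g m| ≤ (δ / 2) * ∫ t in a..(a + r), g t := by
      have h1 : |∫ x in a..(a + r), F x| ≤ (δ / 2) * r := by
        have h := hravg a ha0
        rw [abs_mul, abs_of_pos (by positivity : (0:ℝ) < 1 / r)] at h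
        calc |∫ x in a..(a + r), F x|
            = r * ((1 / r) * |∫ x in a..(a + r), F x|) := by field_simp
          _ ≤ r * (δ / 2) := by nlinarith [abs_nonneg (∫ x in a..(a + r), F x)]
          _ = (δ / 2) * r := by ring
      have h2 : g m * r ≤ ∫ t in a..(a + r), g t := by
        have h3 : (∫ t in a..(a + r), (fun _ : ℝ => g m) t) ≤ ∫ t in a..(a + r), g t :=
          intervalIntegral.integral_mono_on har intervalIntegrable_const
            (hgc.intervalIntegrable _ _) (fun x hx => hmin' x hx)
        simpa [mul_comm] using h3
      calc |(∫ x in a..(a + r), F x) * g m|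
          = |∫ x in a..(a + r), F x| * g m := by rw [abs_mul, abs_of_nonneg hgm0]
        _ ≤ ((δ / 2) * r) * g m := by nlinarith
        _ = (δ / 2) * (g m * r) := by ring
        _ ≤ (δ / 2) * ∫ t in a..(a + r), g t := by nlinarith
    have hCer : C * ε * r = δ / 2 := by
      rw [hεdef]; field_simp
    have habs : |∫ x in a..(a + r), F x * g x|
        ≤ C * (ε * ∫ t in a..(a + r), g t) * r + (δ / 2) * ∫ t in a..(a + r), g t := by
      rw [hsplit]; exact (abs_add_le _ _).trans (add_le_add hb1 hb2)
    have heq : C * (ε * ∫ t in a..(a + r), g t) * r = (δ / 2) * ∫ t in a..(a + r), g t := by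
      rw [← hCer]; ring
    linarith
  -- induction over n intervals
  have Hn : ∀ n : ℕ, |∫ x in M..(M + n * r), F x * g x| ≤ δ * ∫ x in M..(M + n * r), g x := by
    intro n
    induction n with
    | zero => simp
    | succ n ih =>
      have hnr : (0:ℝ) ≤ (n : ℝ) * r := by positivity
      have ha : M ≤ M + (n : ℝ) * r := le_add_of_nonneg_right hnr
      have hcast : (M : ℝ) + ((n : ℕ) + 1 : ℕ) * r = (M + (n:ℝ) * r) + r := by push_cast; ring
      have hsplitF : (∫ x in M..(M + ((n : ℕ) + 1 : ℕ) * r), F x * g x)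
          = (∫ x in M..(M + (n:ℝ) * r), F x * g x)
            + ∫ x in (M + (n:ℝ) * r)..((M + (n:ℝ) * r) + r), F x * g x := by
        rw [hcast,
          ← intervalIntegral.integral_add_adjacent_intervals (hFmul g hgc M (M + (n:ℝ) * r))
            (hFmul g hgc (M + (n:ℝ) * r) ((M + (n:ℝ) * r) + r))]
      have hsplitg : (∫ x in M..(M + ((n : ℕ) + 1 : ℕ) * r), g x)
          = (∫ x in M..(M + (n:ℝ) * r), g x)
            + ∫ x in (M + (n:ℝ) * r)..((M + (n:ℝ) * r) + r), g x := by
        rw [hcast,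
          ← intervalIntegral.integral_add_adjacent_intervals (hgc.intervalIntegrable M (M + (n:ℝ) * r))
            (hgc.intervalIntegrable (M + (n:ℝ) * r) ((M + (n:ℝ) * r) + r))]
      have hk := key (M + (n:ℝ) * r) ha
      calc |∫ x in M..(M + ((n : ℕ) + 1 : ℕ) * r), F x * g x|
          ≤ |∫ x in M..(M + (n:ℝ) * r), F x * g x|
            + |∫ x in (M + (n:ℝ) * r)..((M + (n:ℝ) * r) + r), F x * g x| := by
            rw [hsplitF]; exact abs_add_le _ _
        _ ≤ δ * ∫ x in M..(M + ((n : ℕ) + 1 : ℕ) * r), g x := by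
            rw [hsplitg]; linarith
  -- pass to the limit
  have htends : Tendsto (fun n : ℕ => M + (n : ℝ) * r) atTop atTop := by
    apply tendsto_atTop_add_const_left
    exact Tendsto.atTop_mul_const hr tendsto_natCast_atTop_atTop
  have hIciF : (∫ x in Ici M, F x * g x) = ∫ x in Ioi M, F x * g x :=
    MeasureTheory.integral_Ici_eq_integral_Ioi
  have hIcig : (∫ x in Ici M, g x) = ∫ x in Ioi M, g x :=
    MeasureTheory.integral_Ici_eq_integral_Ioi
  have hT1 : Tendsto (fun n : ℕ => ∫ x in M..(M + (n:ℝ) * r), F x * g x) atTop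
      (nhds (∫ x in Ici M, F x * g x)) := by
    rw [hIciF]
    exact MeasureTheory.intervalIntegral_tendsto_integral_Ioi M
      (hFgInt.mono_set Ioi_subset_Ici_self) htends
  have hT2 : Tendsto (fun n : ℕ => δ * ∫ x in M..(M + (n:ℝ) * r), g x) atTop
      (nhds (δ * ∫ x in Ici M, g x)) := by
    rw [hIcig]
    exact (MeasureTheory.intervalIntegral_tendsto_integral_Ioi M
      (hgIntM.mono_set Ioi_subset_Ici_self) htends).const_mul δ
  have hle : |∫ x in Ici M, F x * g x| ≤ δ * ∫ x in Ici M, g x :=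
    le_of_tendsto_of_tendsto' hT1.abs hT2 Hn
  have hIle : (∫ x in Ici M, g x) ≤ 1 := by
    rw [← hgint]
    apply MeasureTheory.setIntegral_mono_set hgInt
    · exact (ae_restrict_iff' measurableSet_Ici).mpr
        (Filter.Eventually.of_forall fun x hx => (hgpos x hx).le)
    · exact HasSubset.Subset.eventuallyLE (Ici_subset_Ici.mpr hM)
  have hI0 : (0:ℝ) ≤ ∫ x in Ici M, g x :=
    MeasureTheory.setIntegral_nonneg measurableSet_Ici
      (fun x hx => (hgpos x (hM.trans hx)).le)
  nlinarith
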